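/- (Lemma 2.2, inverse source problem.) Let N ≥ 1, 1 ≤ L ≤ M, let μ_1, ..., μ_L be pairwise distinct positive real numbers, let T > 0, and let 0 < t_1 < t_2 < ... < t_M. Let Φ be a real N × L matrix with linearly independent columns, let F = diag(f_1, ..., f_L) with every f_i ≠ 0, let D = diag(d_1, ..., d_L) with d_i = (1 − exp(−μ_i T)) / μ_i, and let J be the L × M matrix with entries J(i, j) = (1 − exp(−μ_i · t_j)) / μ_i. Set A = Φ F J and Ã = Φ D F J. Then the column space of A equals the column space of Ã, i.e., span{y_1, ..., y_M} = span{ỹ_1, ..., ỹ_M}, where y_j and ỹ_j denote the j-th columns of A and Ã respectively. -/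

import Mathlib

set_option autoImplicit false

open Real Finset

private lemma hasDerivAt_sum_exp {n : ℕ} (a c : Fin n → ℝ) (x : ℝ) :
    HasDerivAt (fun y => ∑ i, c i * Real.exp (a i * y))
      (∑ i, c i * a i * Real.exp (a i * x)) x := by
  have : HasDerivAt (fun y => ∑ i, c i * Real.exp (a i * y))
      (∑ i, c i * (Real.exp (a i * x) * (a i * 1))) x := by
    apply HasDerivAt.fun_sum
    intro i _
    exact (((hasDerivAt_id x).const_mul (a i)).exp).const_mul (c i)
  convert this using 1
  apply Finset.sum_congr rfl
  intro i _
  ring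

private lemma strictMono_cons {n : ℕ} (a : ℝ) (s : Fin n → ℝ) (h : StrictMono s)
    (h0 : ∀ k, a < s k) : StrictMono (Fin.cons a s) := by
  intro x y hxy
  rcases Fin.eq_zero_or_eq_succ y with rfl | ⟨j, rfl⟩
  · exact absurd hxy (Fin.not_lt_zero x)
  rcases Fin.eq_zero_or_eq_succ x with rfl | ⟨i, rfl⟩
  · simpa using h0 j
  · simp only [Fin.cons_succ]
    exact h (Fin.succ_lt_succ_iff.mp hxy)

private lemma rolle_chain {n : ℕ} {g : ℝ → ℝ} (hg : Differentiable ℝ g)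
    {s : Fin (n + 1) → ℝ} (hs : StrictMono s) (h0 : ∀ k, g (s k) = 0) :
    ∃ z : Fin n → ℝ, StrictMono z ∧ ∀ k, deriv g (z k) = 0 := by
  have H : ∀ k : Fin n, ∃ c ∈ Set.Ioo (s k.castSucc) (s k.succ), deriv g c = 0 := by
    intro k
    exact exists_deriv_eq_zero (hs (Fin.castSucc_lt_succ : k.castSucc < k.succ))
      hg.continuous.continuousOn (by rw [h0, h0])
  choose z hz hz0 using H
  refine ⟨z, ?_, hz0⟩
  intro k l hkl
  have h1 : z k < s k.succ := (hz k).2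
  have h2 : s l.castSucc ≤ z l := le_of_lt (hz l).1
  have h3 : s k.succ ≤ s l.castSucc := by
    apply hs.monotone
    simp only [Fin.le_def, Fin.val_succ, Fin.coe_castSucc]
    exact hkl
  linarith

private lemma expsum_eq_zero : ∀ (n : ℕ) (a c : Fin n → ℝ), Function.Injective a →
    ∀ s : Fin n → ℝ, StrictMono s →
    (∀ k, ∑ i, c i * Real.exp (a i * s k) = 0) → ∀ i, c i = 0
  | 0 => by intro a c _ s _ _ i; exact i.elim0
  | (n + 1) => by
    intro a c ha s hs hz
    set b : Fin (n + 1) → ℝ := fun i => a i - a 0 with hb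
    set g : ℝ → ℝ := fun x => ∑ i, c i * Real.exp (b i * x) with hg
    have key : ∀ x, g x = Real.exp (-(a 0) * x) * ∑ i, c i * Real.exp (a i * x) := by
      intro x
      rw [hg, Finset.mul_sum]
      apply Finset.sum_congr rfl
      intro i _
      rw [hb]
      simp only []
      rw [mul_comm (Real.exp (-(a 0) * x)), mul_assoc, ← Real.exp_add]
      ring_nf
    have h1z : ∀ k, g (s k) = 0 := by
      intro k; rw [key, hz k, mul_zero]
    have hdiff : Differentiable ℝ g := by
      intro x
      exact (hasDerivAt_sum_exp b c x).differentiableAt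
    obtain ⟨z, hzmono, hz0⟩ := rolle_chain hdiff hs h1z
    have hderiv : ∀ x, deriv g x = ∑ i, c i * b i * Real.exp (b i * x) := fun x =>
      (hasDerivAt_sum_exp b c x).deriv
    have hz' : ∀ k : Fin n, ∑ i : Fin n,
        (c i.succ * b i.succ) * Real.exp (b i.succ * z k) = 0 := by
      intro k
      have h := hz0 k
      rw [hderiv, Fin.sum_univ_succ] at h
      have hb0 : b 0 = 0 := by simp [hb]
      rw [hb0] at h
      simpa using h
    have hbinj : Function.Injective (fun i : Fin n => b i.succ) := by
      intro i j hij
      simp only [hb, sub_left_inj] at hij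
      exact Fin.succ_injective n (ha hij)
    have IH := expsum_eq_zero n (fun i => b i.succ) (fun i => c i.succ * b i.succ)
      hbinj z hzmono hz'
    have hcs : ∀ i : Fin n, c i.succ = 0 := by
      intro i
      have h := IH i
      have hbz : b i.succ ≠ 0 := by
        rw [hb]
        simp only [sub_ne_zero]
        intro hcontra
        exact Fin.succ_ne_zero i (ha hcontra)
      rcases mul_eq_zero.mp h with h' | h'
      · exact h'
      · exact absurd h' hbz
    intro i
    rcases Fin.eq_zero_or_eq_succ i with rfl | ⟨j, rfl⟩
    · have h := hz 0
      rw [Fin.sum_univ_succ] at h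
      simp only [hcs, zero_mul, Finset.sum_const_zero, add_zero] at h
      rcases mul_eq_zero.mp h with h' | h'
      · exact h'
      · exact absurd h' (Real.exp_ne_zero _)
    · exact hcs j

/-- Lemma 2.2 (inverse source problem): with `A = Φ F J` and `Ã = Φ D F J`, where
`D = diag((1 − exp(−μ_i T)) / μ_i)` and `J(i,j) = (1 − exp(−μ_i t_j)) / μ_i`,
the column spaces of `A` and `Ã` coincide. -/
theorem column_space_eq_inverse_source (N L M : ℕ) (hN : 1 ≤ N) (hL : 1 ≤ L) (hLM : L ≤ M)
    (μ : Fin L → ℝ) (hμ : Function.Injective μ) (hμpos : ∀ i, 0 < μ i)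
    (T : ℝ) (hT : 0 < T) (t : Fin M → ℝ) (ht : StrictMono t) (htpos : ∀ j, 0 < t j)
    (Φ : Matrix (Fin N) (Fin L) ℝ)
    (hΦ : LinearIndependent ℝ (fun j : Fin L => fun i : Fin N => Φ i j))
    (f : Fin L → ℝ) (hf : ∀ i, f i ≠ 0)
    (J : Matrix (Fin L) (Fin M) ℝ) (hJ : ∀ i j, J i j = (1 - Real.exp (-μ i * t j)) / μ i)
    (A Atil : Matrix (Fin N) (Fin M) ℝ)
    (hA : A = Φ * Matrix.diagonal f * J)
    (hAtil : Atil = Φ * Matrix.diagonal (fun i => (1 - Real.exp (-μ i * T)) / μ i) *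
      Matrix.diagonal f * J) :
    Submodule.span ℝ (Set.range fun j : Fin M => fun i : Fin N => A i j) =
      Submodule.span ℝ (Set.range fun j : Fin M => fun i : Fin N => Atil i j) := by
  -- Step 1: rows of J are linearly independent.
  have hrows : LinearIndependent ℝ (fun i : Fin L => J i) := by
    rw [Fintype.linearIndependent_iff]
    intro v hv i₀
    set c : Fin L → ℝ := fun i => v i / μ i with hc
    set g : ℝ → ℝ := fun x => (∑ i, (-(c i)) * Real.exp (-μ i * x)) + ∑ i, c i with hgdef
    have hveq : ∀ j : Fin M, ∑ i, v i * J i j = 0 := by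
      intro j
      have := congr_fun hv j
      simpa [Finset.sum_apply] using this
    -- zeros of g
    set s : Fin (L + 1) → ℝ := Fin.cons 0 (fun k => t (Fin.castLE hLM k)) with hsdef
    have hsmono : StrictMono s := by
      apply strictMono_cons
      · exact fun x y h => ht (by simpa only [Fin.lt_def, Fin.coe_castLE] using h)
      · intro k; exact htpos _
    have hgval : ∀ x : ℝ, g x = ∑ i, c i * (1 - Real.exp (-μ i * x)) := by
      intro x
      rw [hgdef]
      simp only []
      rw [← Finset.sum_add_distrib]
      exact Finset.sum_congr rfl fun i _ => by ring
    have hgz : ∀ k, g (s k) = 0 := by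
      intro k
      rcases Fin.eq_zero_or_eq_succ k with rfl | ⟨j, rfl⟩
      · have e0 : s 0 = 0 := rfl
        rw [e0, hgval]
        simp only [mul_zero, Real.exp_zero, sub_self, mul_zero]
        exact Finset.sum_const_zero
      · have e1 : s j.succ = t (Fin.castLE hLM j) := rfl
        rw [e1, hgval]
        have heq : ∀ i : Fin L, c i * (1 - Real.exp (-μ i * t (Fin.castLE hLM j)))
            = v i * J i (Fin.castLE hLM j) := by
          intro i
          rw [hJ, hc]
          ring
        rw [Finset.sum_congr rfl fun i _ => heq i]
        exact hveq _
    have hdiff : Differentiable ℝ g := by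
      intro x
      exact ((hasDerivAt_sum_exp (fun i => -μ i) (fun i => -(c i)) x).add_const _).differentiableAt
    obtain ⟨z, hzmono, hz0⟩ := rolle_chain hdiff hsmono hgz
    have hderiv : ∀ x, deriv g x = ∑ i, (-(c i)) * (-μ i) * Real.exp (-μ i * x) := fun x =>
      ((hasDerivAt_sum_exp (fun i => -μ i) (fun i => -(c i)) x).add_const _).deriv
    have hzz : ∀ k : Fin L, ∑ i, (c i * μ i) * Real.exp (-μ i * z k) = 0 := by
      intro k
      have h := hz0 k
      rw [hderiv] at h
      rw [← h]
      apply Finset.sum_congr rfl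
      intro i _
      ring
    have hainj : Function.Injective (fun i : Fin L => -μ i) := fun i j hij =>
      hμ (neg_injective hij)
    have hzero := expsum_eq_zero L (fun i => -μ i) (fun i => c i * μ i) hainj z hzmono hzz
    have hc0 : c i₀ = 0 := by
      rcases mul_eq_zero.mp (hzero i₀) with h' | h'
      · exact h'
      · exact absurd h' (ne_of_gt (hμpos i₀))
    have hvz : v i₀ = c i₀ * μ i₀ :=
      (div_mul_cancel₀ (v i₀) (ne_of_gt (hμpos i₀))).symm
    rw [hvz, hc0, zero_mul]
  -- Step 2: J.mulVecLin is surjective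
  have hJrank : J.rank = L := by
    rw [hrows.rank_matrix]
    simp
  have hJtop : LinearMap.range J.mulVecLin = ⊤ := by
    apply Submodule.eq_top_of_finrank_eq
    rw [← Matrix.rank, hJrank, Module.finrank_fintype_fun_eq_card, Fintype.card_fin]
  have hJsurj : Function.Surjective J.mulVecLin := LinearMap.range_eq_top.mp hJtop
  -- Step 3: diagonal matrices with nonzero entries are surjective
  have hdiag_surj : ∀ w : Fin L → ℝ, (∀ i, w i ≠ 0) →
      Function.Surjective (Matrix.diagonal w).mulVecLin := by
    intro w hw y
    refine ⟨fun i => y i / w i, ?_⟩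
    ext i
    rw [Matrix.mulVecLin_apply, Matrix.mulVec_diagonal]
    field_simp [hw i]
  -- Step 4: compute both column spaces
  have htrans : ∀ B : Matrix (Fin N) (Fin M) ℝ,
      (fun j : Fin M => fun i : Fin N => B i j) = B.col := fun B => rfl
  rw [htrans A, htrans Atil, ← Matrix.range_mulVecLin, ← Matrix.range_mulVecLin]
  have hD : ∀ i, (1 - Real.exp (-μ i * T)) / μ i ≠ 0 := by
    intro i
    apply div_ne_zero _ (ne_of_gt (hμpos i))
    have : Real.exp (-μ i * T) < 1 := by
      rw [← Real.exp_zero]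
      apply Real.exp_lt_exp.mpr
      have := mul_pos (hμpos i) hT
      linarith
    linarith
  have key : ∀ P : Matrix (Fin L) (Fin L) ℝ, Function.Surjective P.mulVecLin →
      LinearMap.range (Φ * P * J).mulVecLin = LinearMap.range Φ.mulVecLin := by
    intro P hP
    rw [Matrix.mul_assoc, Matrix.mulVecLin_mul, LinearMap.range_comp,
      Matrix.mulVecLin_mul, LinearMap.range_comp, LinearMap.range_eq_top.mpr hJsurj,
      Submodule.map_top, LinearMap.range_eq_top.mpr hP, Submodule.map_top]
  rw [hA, hAtil]
  rw [key (Matrix.diagonal f) (hdiag_surj f hf)]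
  have hassoc : Φ * Matrix.diagonal (fun i => (1 - Real.exp (-μ i * T)) / μ i) *
      Matrix.diagonal f * J
      = Φ * (Matrix.diagonal (fun i => (1 - Real.exp (-μ i * T)) / μ i) *
        Matrix.diagonal f) * J := by
    rw [Matrix.mul_assoc Φ]
  rw [hassoc, key _ ?_]
  rw [Matrix.mulVecLin_mul]
  exact (hdiag_surj _ hD).comp (hdiag_surj f hf)
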